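/- Let (G, w) be an SCP instance and let x be an integral solution of the LP constraints (1)–(3). Then for each i, the set {e ∈ E : x_e^i = 1} is the edge set of a directed path in G from s_i to some destination; these k paths are pairwise edge-disjoint, together cover every edge of G, and form a feasible SCP solution whose cost equals the objective value Σ_e Σ_i w_e^i x_e^i of x. -/

import Mathlib

/-! Common setup: finite directed graphs as finsets of ordered pairs of vertices. -/

/-- The list of edges of a path given as a list of vertices. -/
def pathEdges {V : Type} (p : List V) : List (V × V) := p.zip p.tail

/-- `p` is a directed path in the graph with edge set `E`: a nonempty sequence of
pairwise-distinct vertices in which consecutive vertices are joined by edges of `E`. -/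
def IsPath {V : Type} [DecidableEq V] (E : Finset (V × V)) (p : List V) : Prop :=
  p ≠ [] ∧ p.Nodup ∧ p.Chain' (fun u v => (u, v) ∈ E)

/-- `p` is a directed path in `E` from `a` to `b`. -/
def IsPathFrom {V : Type} [DecidableEq V] (E : Finset (V × V)) (p : List V) (a b : V) : Prop :=
  IsPath E p ∧ p.head? = some a ∧ p.getLast? = some b

/-- The indegree of vertex `v`. -/
def indeg {V : Type} [DecidableEq V] (E : Finset (V × V)) (v : V) : ℕ :=
  (E.filter (fun e => e.2 = v)).card

/-- The outdegree of vertex `v`. -/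
def outdeg {V : Type} [DecidableEq V] (E : Finset (V × V)) (v : V) : ℕ :=
  (E.filter (fun e => e.1 = v)).card

/-- A directed cycle: a sequence `v₀, v₁, …, v_ℓ = v₀` with `ℓ ≥ 1` and all
`(v_j, v_{j+1})` edges. -/
def IsCycle {V : Type} [DecidableEq V] (E : Finset (V × V)) (p : List V) : Prop :=
  2 ≤ p.length ∧ p.Chain' (fun u v => (u, v) ∈ E) ∧ p.head? = p.getLast?

/-- The graph is acyclic: it contains no directed cycle. -/
def Acyclic {V : Type} [DecidableEq V] (E : Finset (V × V)) : Prop :=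
  ∀ p : List V, ¬ IsCycle E p

/-- The ant-conservation condition for a directed graph with edge set `E`, with `k`
distinguished sources `s 1, …, s k` (exactly the vertices of indegree 0) and `k`
distinguished destinations `t 1, …, t k` (exactly the vertices of outdegree 0):
`Σᵢ outdeg (s i) = Σᵢ indeg (t i) = k`, and `indeg v = outdeg v` for every
intermediate vertex `v`. -/
structure AntConservation {V : Type} [DecidableEq V]
    (E : Finset (V × V)) (k : ℕ) (s t : Fin k → V) : Prop where
  s_inj : Function.Injective s
  t_inj : Function.Injective t
  sources : ∀ v, indeg E v = 0 ↔ ∃ i, s i = v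
  dests : ∀ v, outdeg E v = 0 ↔ ∃ i, t i = v
  out_sum : ∑ i, outdeg E (s i) = k
  in_sum : ∑ i, indeg E (t i) = k
  conserve : ∀ v, (¬ ∃ i, s i = v) → (¬ ∃ i, t i = v) → indeg E v = outdeg E v

/-- The paths `P 1, …, P k` are pairwise edge-disjoint. -/
def EdgeDisjoint {V : Type} {k : ℕ} (P : Fin k → List V) : Prop :=
  ∀ i j, i ≠ j → ∀ e, e ∈ pathEdges (P i) → e ∉ pathEdges (P j)

/-- The total weight of the edges of a path under an edge-weight function. -/
def listWeight {V : Type} (wt : V × V → ℕ) (p : List V) : ℕ :=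
  ((pathEdges p).map wt).sum

/-- The LP constraints (1)–(3) of the SCP linear program on variables `x i e`:
(1) `Σᵢ x i e = 1` for every edge `e`; (2) flow conservation of each commodity `i` at
every intermediate vertex; (3) one unit of commodity `i` leaves the source `s i`. -/
def LPFeasible {V : Type} [DecidableEq V] (E : Finset (V × V)) {k : ℕ}
    (s t : Fin k → V) (x : Fin k → V × V → ℚ) : Prop :=
  (∀ e ∈ E, ∑ i, x i e = 1) ∧
  (∀ v : V, (¬ ∃ i, s i = v) → (¬ ∃ i, t i = v) → ∀ i,
    ∑ e ∈ E.filter (fun e => e.2 = v), x i e = ∑ e ∈ E.filter (fun e => e.1 = v), x i e) ∧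
  (∀ i, ∑ e ∈ E.filter (fun e => e.1 = s i), x i e = 1)

/-- The objective value `Σ_e Σ_i w i e * x i e` of the SCP linear program. -/
def LPObjective {V : Type} (E : Finset (V × V)) {k : ℕ}
    (w : Fin k → V × V → ℕ) (x : Fin k → V × V → ℚ) : ℚ :=
  ∑ e ∈ E, ∑ i, (w i e : ℚ) * x i e

section SCPHelpers
variable {V : Type} [DecidableEq V]

lemma pathEdges_nodup {V : Type} {p : List V} (h : p.Nodup) : (pathEdges p).Nodup := by
  have hm : (p.zip p.tail).map Prod.snd = p.tail := by
    apply List.map_snd_zip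
    simp [List.length_tail]
  have ht : p.tail.Nodup := h.sublist (List.tail_sublist p)
  rw [← hm] at ht
  exact ht.of_map _

lemma pathEdges_sub {V : Type} {p : List V} {F : Finset (V × V)} [DecidableEq V]
    (h : p.Chain' (fun u v => (u,v) ∈ F)) : ∀ e ∈ pathEdges p, e ∈ F := by
  intro e he
  induction p with
  | nil => simp [pathEdges] at he
  | cons a l ih =>
    cases l with
    | nil => simp [pathEdges] at he
    | cons b m =>
      replace h := List.isChain_cons_cons.1 h
      have : pathEdges (a :: b :: m) = (a,b) :: pathEdges (b :: m) := rfl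
      rw [this] at he
      rw [List.mem_cons] at he
      rcases he with he | he
      · subst he; exact h.1
      · exact ih h.2 he

lemma acyclic_mono {F G : Finset (V × V)} (h : F ⊆ G) (hG : Acyclic G) : Acyclic F := by
  intro p hp
  exact hG p ⟨hp.1, hp.2.1.imp (fun {a b} hab => h hab), hp.2.2⟩

lemma indeg_mono {F G : Finset (V × V)} (h : F ⊆ G) (v : V) : indeg F v ≤ indeg G v :=
  Finset.card_le_card (Finset.filter_subset_filter _ h)

lemma outdeg_mono {F G : Finset (V × V)} (h : F ⊆ G) (v : V) : outdeg F v ≤ outdeg G v :=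
  Finset.card_le_card (Finset.filter_subset_filter _ h)

lemma sum_indeg [Fintype V] (F : Finset (V × V)) : ∑ v, indeg F v = F.card :=
  (Finset.card_eq_sum_card_fiberwise (fun e _ => Finset.mem_univ e.2)).symm

lemma sum_outdeg [Fintype V] (F : Finset (V × V)) : ∑ v, outdeg F v = F.card :=
  (Finset.card_eq_sum_card_fiberwise (fun e _ => Finset.mem_univ e.1)).symm

lemma indeg_erase_self {F : Finset (V × V)} {c b : V} (h : (c,b) ∈ F) :
    indeg (F.erase (c,b)) b + 1 = indeg F b := by
  unfold indeg
  rw [Finset.filter_erase]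
  rw [Finset.card_erase_of_mem (by simp [h])]
  have : 0 < (Finset.filter (fun e => e.2 = b) F).card :=
    Finset.card_pos.2 ⟨(c,b), by simp [h]⟩
  omega

lemma indeg_erase_ne {F : Finset (V × V)} {c b v : V} (h : v ≠ b) :
    indeg (F.erase (c,b)) v = indeg F v := by
  unfold indeg
  rw [Finset.filter_erase, Finset.erase_eq_of_notMem (by simp [h.symm])]

lemma outdeg_erase_self {F : Finset (V × V)} {c b : V} (h : (c,b) ∈ F) :
    outdeg (F.erase (c,b)) c + 1 = outdeg F c := by
  unfold outdeg
  rw [Finset.filter_erase]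
  rw [Finset.card_erase_of_mem (by simp [h])]
  have : 0 < (Finset.filter (fun e => e.1 = c) F).card :=
    Finset.card_pos.2 ⟨(c,b), by simp [h]⟩
  omega

lemma outdeg_erase_ne {F : Finset (V × V)} {c b v : V} (h : v ≠ c) :
    outdeg (F.erase (c,b)) v = outdeg F v := by
  unfold outdeg
  rw [Finset.filter_erase, Finset.erase_eq_of_notMem (by simp [h.symm])]

lemma outdeg_pos {F : Finset (V × V)} {v : V} (h : 0 < outdeg F v) : ∃ b, (v, b) ∈ F := by
  obtain ⟨e, he⟩ := Finset.card_pos.1 h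
  simp only [Finset.mem_filter] at he
  exact ⟨e.2, by rw [← he.2]; exact he.1⟩

lemma indeg_pos {F : Finset (V × V)} {v b : V} (h : (v, b) ∈ F) : 0 < indeg F b :=
  Finset.card_pos.2 ⟨(v,b), by simp [h]⟩

lemma outdeg_pos' {F : Finset (V × V)} {v b : V} (h : (v, b) ∈ F) : 0 < outdeg F v :=
  Finset.card_pos.2 ⟨(v,b), by simp [h]⟩

lemma walk_cycle [Fintype V] {F : Finset (V × V)} (f : ℕ → V)
    (hf : ∀ n, (f n, f (n+1)) ∈ F) : ¬ Acyclic F := by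
  intro hacyc
  obtain ⟨m, n, hmn, heq⟩ := Finite.exists_ne_map_eq_of_infinite f
  wlog hlt : m < n generalizing m n
  · exact this n m hmn.symm heq.symm (by omega)
  set L : ℕ := n - m with hL
  have hL1 : 1 ≤ L := by omega
  set p : List V := (List.range (L + 1)).map (fun j => f (m + j)) with hp
  have hlen : p.length = L + 1 := by simp [hp]
  apply hacyc p
  refine ⟨by omega, ?_, ?_⟩
  · rw [List.Chain', List.isChain_iff_getElem]
    intro i hi
    simp only [hlen] at hi
    have : ∀ (j) (hj : j < p.length), p[j]'hj = f (m + j) := by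
      intro j hj
      simp [hp]
    rw [this, this]
    rw [show m + (i + 1) = (m + i) + 1 by omega]
    exact hf (m + i)
  · have h1 : p.head? = some (f m) := by
      rw [hp]
      rw [List.range_succ_eq_map]
      simp
    have h2 : p.getLast? = some (f (m + L)) := by
      rw [List.getLast?_eq_getElem?]
      rw [List.getElem?_eq_getElem (by omega)]
      simp [hp, hlen]
    rw [h1, h2]
    have : m + L = n := by omega
    rw [this, heq]

lemma scp_balanced_empty [Fintype V] {F : Finset (V × V)} (hacyc : Acyclic F)
    (hbal : ∀ v, indeg F v = outdeg F v) : F = ∅ := by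
  by_contra hne
  obtain ⟨⟨a, b⟩, hab⟩ := Finset.nonempty_iff_ne_empty.2 hne
  classical
  have step : ∀ v, 0 < indeg F v → ∃ w, (v, w) ∈ F := by
    intro v hv
    exact outdeg_pos (by rw [← hbal v]; exact hv)
  let nxt : V → V := fun v => if h : 0 < indeg F v then (step v h).choose else v
  let f : ℕ → V := fun n => nxt^[n] b
  have hf : ∀ n, (f n, f (n+1)) ∈ F := by
    intro n
    induction n with
    | zero =>
      have h0 : 0 < indeg F b := indeg_pos hab
      show ((b : V), nxt b) ∈ F
      simp only [nxt, dif_pos h0]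
      exact (step b h0).choose_spec
    | succ n ih =>
      have h1 : 0 < indeg F (f (n+1)) := indeg_pos ih
      have : f (n+2) = nxt (f (n+1)) := Function.iterate_succ_apply' nxt (n+1) b
      rw [this]
      simp only [nxt, dif_pos h1]
      exact (step _ h1).choose_spec
  exact walk_cycle f hf hacyc

lemma scp_key [Fintype V] : ∀ (n : ℕ) (F : Finset (V × V)) (c : V),
    F.card ≤ n → Acyclic F →
    outdeg F c = indeg F c + 1 →
    (∀ v, v ≠ c → indeg F v = outdeg F v ∨ outdeg F v = 0) →
    (∀ v, outdeg F v = 0 → indeg F v ≤ 1) →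
    ∃ (p : List V) (d : V), p.head? = some c ∧ p.getLast? = some d ∧ p.Nodup ∧
      p.Chain' (fun u v => (u, v) ∈ F) ∧ outdeg F d = 0 ∧ 1 ≤ indeg F d ∧
      (∀ e, e ∈ pathEdges p ↔ e ∈ F) := by
  intro n
  induction n with
  | zero =>
    intro F c hcard _ hB _ _
    exfalso
    obtain ⟨b, hcb⟩ := outdeg_pos (F := F) (v := c) (by omega)
    have := Finset.card_pos.2 ⟨_, hcb⟩
    omega
  | succ n ih =>
    intro F c hcard hacyc hB hC hD
    obtain ⟨b, hcb⟩ := outdeg_pos (F := F) (v := c) (by omega)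
    have hbc : b ≠ c := by
      intro h
      subst h
      exact hacyc [b, b] ⟨by simp, List.isChain_cons_cons.2 ⟨hcb, List.IsChain.singleton _⟩, by simp⟩
    by_cases hob : outdeg F b = 0
    · -- case 1 : b is the sink, F = {(c,b)}
      have hib : indeg F b = 1 := le_antisymm (hD b hob) (indeg_pos hcb)
      set F' := F.erase (c, b) with hF'
      have hsub : F' ⊆ F := Finset.erase_subset _ _
      have hbal : ∀ v, indeg F' v = outdeg F' v := by
        intro v
        by_cases hv : v = b
        · rw [hv]
          have h1 : indeg F' b + 1 = indeg F b := by rw [hF']; exact indeg_erase_self hcb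
          have h2 : outdeg F' b = outdeg F b := by rw [hF']; exact outdeg_erase_ne hbc
          omega
        · by_cases hvc : v = c
          · rw [hvc]
            have h1 : outdeg F' c + 1 = outdeg F c := by rw [hF']; exact outdeg_erase_self hcb
            have h2 : indeg F' c = indeg F c := by rw [hF']; exact indeg_erase_ne hbc.symm
            omega
          · have h1 : indeg F' v = indeg F v := by rw [hF']; exact indeg_erase_ne hv
            have h2 : outdeg F' v = outdeg F v := by rw [hF']; exact outdeg_erase_ne hvc
            rcases hC v hvc with h | h
            · omega
            · rw [h1, h2, h]
              by_contra hne
              have hin : 1 ≤ indeg F v := by omega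
              have hsum : ∑ w, outdeg F w = ∑ w, indeg F w := by
                rw [sum_outdeg, sum_indeg]
              have hmemc : c ∈ (Finset.univ : Finset V) := Finset.mem_univ _
              have hmemb : b ∈ Finset.univ.erase c := by
                simp [hbc]
              have hmemv : v ∈ (Finset.univ.erase c).erase b := by
                simp [hv, hvc]
              rw [← Finset.add_sum_erase _ _ hmemc, ← Finset.add_sum_erase _ _ hmemb,
                ← Finset.add_sum_erase _ _ hmemv, ← Finset.add_sum_erase _ _ hmemc,
                ← Finset.add_sum_erase _ _ hmemb, ← Finset.add_sum_erase _ _ hmemv] at hsum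
              have hle : ∑ w ∈ ((Finset.univ.erase c).erase b).erase v, outdeg F w ≤
                  ∑ w ∈ ((Finset.univ.erase c).erase b).erase v, indeg F w := by
                apply Finset.sum_le_sum
                intro w hw
                have hwc : w ≠ c := by
                  simp only [Finset.mem_erase] at hw
                  exact hw.2.2.1
                rcases hC w hwc with h' | h'
                · omega
                · omega
              omega
      have hF'e : F' = ∅ := scp_balanced_empty (acyclic_mono hsub hacyc) hbal
      have hone : ∀ e ∈ F, e = (c, b) := by
        intro e he
        by_contra hne
        have : e ∈ F' := by rw [hF']; exact Finset.mem_erase.2 ⟨hne, he⟩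
        simp [hF'e] at this
      refine ⟨[c, b], b, rfl, by simp, by simp [Ne.symm hbc], List.isChain_cons_cons.2 ⟨hcb, List.IsChain.singleton _⟩, hob,
        by omega, ?_⟩
      intro e
      constructor
      · intro he
        have : e = (c, b) := by
          simpa [pathEdges] using he
        rw [this]; exact hcb
      · intro he
        have := hone e he
        simp [pathEdges, this]
    · -- case 2 : recurse
      have hibob : indeg F b = outdeg F b := (hC b hbc).resolve_right hob
      set F' := F.erase (c, b) with hF'
      have hsub : F' ⊆ F := Finset.erase_subset _ _
      have hcard' : F'.card ≤ n := by
        rw [hF', Finset.card_erase_of_mem hcb]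
        have := Finset.card_pos.2 ⟨_, hcb⟩
        omega
      have hacyc' : Acyclic F' := acyclic_mono hsub hacyc
      have hB' : outdeg F' b = indeg F' b + 1 := by
        have h1 : indeg F' b + 1 = indeg F b := by rw [hF']; exact indeg_erase_self hcb
        have h2 : outdeg F' b = outdeg F b := by rw [hF']; exact outdeg_erase_ne hbc
        have h3 := indeg_pos hcb
        omega
      have hC' : ∀ v, v ≠ b → indeg F' v = outdeg F' v ∨ outdeg F' v = 0 := by
        intro v hv
        by_cases hvc : v = c
        · left
          rw [hvc]
          have h1 : outdeg F' c + 1 = outdeg F c := by rw [hF']; exact outdeg_erase_self hcb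
          have h2 : indeg F' c = indeg F c := by
            rw [hF']; exact indeg_erase_ne (hvc ▸ hv)
          omega
        · have h1 : indeg F' v = indeg F v := by rw [hF']; exact indeg_erase_ne hv
          have h2 : outdeg F' v = outdeg F v := by rw [hF']; exact outdeg_erase_ne hvc
          rw [h1, h2]
          exact hC v hvc
      have hD' : ∀ v, outdeg F' v = 0 → indeg F' v ≤ 1 := by
        intro v hv
        by_cases hvc : v = c
        · subst hvc
          have h1 : outdeg F' v + 1 = outdeg F v := by rw [hF']; exact outdeg_erase_self hcb
          have h2 : indeg F' v = indeg F v := by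
            rw [hF']
            exact indeg_erase_ne (fun h => hbc (h ▸ rfl))
          omega
        · have h2 : outdeg F' v = outdeg F v := by rw [hF']; exact outdeg_erase_ne hvc
          have h1 : indeg F' v ≤ indeg F v := indeg_mono hsub v
          have := hD v (by omega)
          omega
      obtain ⟨p', d, hh, hl, hnd, hch, hod, hid, hpe⟩ := ih F' b hcard' hacyc' hB' hC' hD'
      obtain ⟨tl, rfl⟩ : ∃ tl, p' = b :: tl := by
        cases p' with
        | nil => simp at hh
        | cons hd tl =>
          refine ⟨tl, ?_⟩
          have : hd = b := by simpa using hh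
          rw [this]
      -- c ∉ p'
      have hcnp : c ∉ b :: tl := by
        intro hmem
        set m := (b :: tl).idxOf c with hm
        have hmlt : m < (b :: tl).length := List.idxOf_lt_length_iff.2 hmem
        set q := (b :: tl).take (m + 1) with hq
        have hqcons : q = b :: tl.take m := by rw [hq, List.take_succ_cons]
        have hqpre : q <+: (b :: tl) := by rw [hq]; exact List.take_prefix _ _
        have hqlen : q.length = m + 1 := by
          rw [hq, List.length_take]
          omega
        have hqch : q.Chain' (fun u v => (u, v) ∈ F') := hch.prefix hqpre
        have hqlast : q.getLast? = some c := by
          rw [List.getLast?_eq_getElem?, hqlen, Nat.add_sub_cancel, hq,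
            List.getElem?_take_of_lt (Nat.lt_succ_self m),
            List.getElem?_eq_getElem hmlt]
          simp [hm, List.getElem_idxOf]
        apply hacyc (c :: q)
        refine ⟨by simp [hqlen], ?_, ?_⟩
        · rw [List.Chain', List.isChain_cons]
          constructor
          · intro y hy
            rw [hqcons] at hy
            simp only [List.head?_cons, Option.mem_def, Option.some.injEq] at hy
            rw [← hy]
            exact hcb
          · exact hqch.imp (fun {a b} hab => hsub hab)
        · rw [List.head?_cons, hqcons, List.getLast?_cons_cons, ← hqcons, hqlast]
      refine ⟨c :: b :: tl, d, rfl, ?_, ?_, ?_, ?_, ?_, ?_⟩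
      · rw [List.getLast?_cons_cons]
        exact hl
      · exact List.nodup_cons.2 ⟨hcnp, hnd⟩
      · refine List.isChain_cons_cons.2 ?_
        exact ⟨hcb, hch.imp (fun {a b} hab => hsub hab)⟩
      · have hdc : d ≠ c := by
          intro h
          subst h
          exact hcnp (List.mem_of_mem_getLast? hl)
        have : outdeg F' d = outdeg F d := by rw [hF']; exact outdeg_erase_ne hdc
        omega
      · exact le_trans hid (indeg_mono hsub d)
      · intro e
        have hped : pathEdges (c :: b :: tl) = (c, b) :: pathEdges (b :: tl) := rfl
        rw [hped, List.mem_cons]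
        constructor
        · rintro (rfl | he)
          · exact hcb
          · exact hsub ((hpe e).1 he)
        · intro he
          by_cases hecb : e = (c, b)
          · left; exact hecb
          · right
            refine (hpe e).2 ?_
            rw [hF']
            exact Finset.mem_erase.2 ⟨hecb, he⟩

/-- all-ones lemma -/
lemma scp_all_one {k : ℕ} (g : Fin k → ℕ) (h1 : ∀ i, 1 ≤ g i) (hs : ∑ i, g i = k) :
    ∀ i, g i = 1 := by
  intro i
  by_contra hne
  have h2 : 2 ≤ g i := by have := h1 i; omega
  have hrest : (k - 1 : ℕ) ≤ ∑ j ∈ Finset.univ.erase i, g j := by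
    calc (k - 1 : ℕ) = (Finset.univ.erase i).card := by
          rw [Finset.card_erase_of_mem (Finset.mem_univ i)]
          simp
      _ ≤ ∑ j ∈ Finset.univ.erase i, g j := Finset.card_nsmul_le_sum _ _ 1 (fun j _ => h1 j) |>.trans_eq' (by simp)
  have := Finset.add_sum_erase Finset.univ g (Finset.mem_univ i)
  have hk : 1 ≤ k := by
    have : (i : ℕ) < k := i.isLt
    omega
  omega


end SCPHelpers

/-- Given an SCP instance and an integral solution `x` of the LP
constraints (1)–(3), for each `i` the set `{e ∈ E : x i e = 1}` is the edge set of a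
directed path in `G` from `s i` to some destination; these `k` paths are pairwise
edge-disjoint, together cover every edge of `G`, and form a feasible SCP solution
whose cost equals the objective value of `x`. -/
theorem stmt11 {V : Type} [Fintype V] [DecidableEq V] (E : Finset (V × V)) (k : ℕ)
    (s t : Fin k → V) (hacyc : Acyclic E) (hac : AntConservation E k s t)
    (w : Fin k → V × V → ℕ)
    (x : Fin k → V × V → ℚ)
    (hx : LPFeasible E s t x)
    (hint : ∀ i, ∀ e ∈ E, x i e = 0 ∨ x i e = 1) :
    ∃ P : Fin k → List V,
      (∀ i, ∃ j, IsPathFrom E (P i) (s i) (t j)) ∧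
      (∀ i e, e ∈ pathEdges (P i) ↔ e ∈ E ∧ x i e = 1) ∧
      EdgeDisjoint P ∧
      (∀ e ∈ E, ∃ i, e ∈ pathEdges (P i)) ∧
      (∑ i, listWeight (w i) (P i) : ℕ) = LPObjective E w x := by
  classical
  obtain ⟨h1, h2, h3⟩ := hx
  set F : Fin k → Finset (V × V) := fun i => E.filter (fun e => x i e = 1) with hF
  have hFsub : ∀ i, F i ⊆ E := fun i => Finset.filter_subset _ _
  -- (a) uniqueness of commodity
  have uniq : ∀ e ∈ E, ∀ i j, x i e = 1 → x j e = 1 → i = j := by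
    intro e he i j hi hj
    by_contra hij
    have hnn : ∀ m ∈ (Finset.univ : Finset (Fin k)), 0 ≤ x m e := by
      intro m _
      rcases hint m e he with h | h <;> rw [h] <;> norm_num
    have := Finset.add_le_sum hnn (Finset.mem_univ i) (Finset.mem_univ j) hij
    rw [h1 e he, hi, hj] at this
    norm_num at this
  -- (b) sums count
  have sumcount : ∀ (i : Fin k) (S : Finset (V × V)), S ⊆ E →
      ∑ e ∈ S, x i e = ((S.filter (fun e => x i e = 1)).card : ℚ) := by
    intro i S hS
    rw [← Finset.sum_boole]
    apply Finset.sum_congr rfl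
    intro e he
    rcases hint i e (hS he) with h | h <;> simp [h]
  -- (c) degrees of F i
  have houtF : ∀ (i : Fin k) v, ((outdeg (F i) v : ℕ) : ℚ) = ∑ e ∈ E.filter (fun e => e.1 = v), x i e := by
    intro i v
    rw [sumcount i _ (Finset.filter_subset _ _)]
    congr 1
    unfold outdeg
    rw [hF]
    simp only
    rw [Finset.filter_comm]
  have hinF : ∀ (i : Fin k) v, ((indeg (F i) v : ℕ) : ℚ) = ∑ e ∈ E.filter (fun e => e.2 = v), x i e := by
    intro i v
    rw [sumcount i _ (Finset.filter_subset _ _)]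
    congr 1
    unfold indeg
    rw [hF]
    simp only
    rw [Finset.filter_comm]
  -- source/dest degrees in E
  have hsrc_in : ∀ j, indeg E (s j) = 0 := fun j => (hac.sources (s j)).2 ⟨j, rfl⟩
  have hdst_out : ∀ j, outdeg E (t j) = 0 := fun j => (hac.dests (t j)).2 ⟨j, rfl⟩
  have houts1 : ∀ j, 1 ≤ outdeg E (s j) := by
    intro j
    by_contra hzero
    have h0 : outdeg E (s j) = 0 := by omega
    have hemp : E.filter (fun e => e.1 = s j) = ∅ := Finset.card_eq_zero.1 h0
    have h4 := h3 j
    rw [hemp, Finset.sum_empty] at h4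
    norm_num at h4
  have houts : ∀ j, outdeg E (s j) = 1 := scp_all_one _ houts1 hac.out_sum
  have hints : ∀ j, indeg E (t j) = 1 := by
    apply scp_all_one _ _ hac.in_sum
    intro j
    by_contra hzero
    have h0 : indeg E (t j) = 0 := by omega
    obtain ⟨m, hm⟩ := (hac.sources (t j)).1 h0
    have hf : E.filter (fun e => e.1 = s m) = ∅ := by
      rw [hm]
      exact Finset.card_eq_zero.1 (hdst_out j)
    have := h3 m
    rw [hf] at this
    simp at this
  -- F i degrees at s i
  have houtsi : ∀ i, outdeg (F i) (s i) = 1 := by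
    intro i
    have hq : ((outdeg (F i) (s i) : ℕ) : ℚ) = 1 := by
      rw [houtF]
      exact h3 i
    exact_mod_cast hq
  have hinsi : ∀ i j, indeg (F i) (s j) = 0 := by
    intro i j
    have := indeg_mono (hFsub i) (s j)
    have := hsrc_in j
    omega
  -- invariant (C)
  have hCinv : ∀ i v, v ≠ s i → indeg (F i) v = outdeg (F i) v ∨ outdeg (F i) v = 0 := by
    intro i v hv
    by_cases hs' : ∃ j, s j = v
    · right
      obtain ⟨j, rfl⟩ := hs'
      have hji : j ≠ i := fun h => hv (by rw [h])
      -- the unique out-edge of s j carries commodity j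
      obtain ⟨e₀, he₀⟩ := Finset.card_eq_one.1 (houts j)
      have hxj : x j e₀ = 1 := by
        have := h3 j
        rw [he₀, Finset.sum_singleton] at this
        exact this
      have he₀E : e₀ ∈ E ∧ e₀.1 = s j := by
        have : e₀ ∈ E.filter (fun e => e.1 = s j) := by rw [he₀]; simp
        simpa using this
      by_contra hne
      obtain ⟨e, he⟩ := Finset.card_pos.1 (by omega : 0 < outdeg (F i) (s j))
      simp only [Finset.mem_filter, hF] at he
      have hee₀ : e = e₀ := by
        have : e ∈ E.filter (fun e => e.1 = s j) := by
          simp only [Finset.mem_filter]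
          exact ⟨he.1.1, he.2⟩
        rw [he₀] at this
        simpa using this
      have : i = j := uniq e₀ he₀E.1 i j (hee₀ ▸ he.1.2) hxj
      exact hji this.symm
    · by_cases ht' : ∃ j, t j = v
      · right
        obtain ⟨j, rfl⟩ := ht'
        have := outdeg_mono (hFsub i) (t j)
        have := hdst_out j
        omega
      · left
        have := h2 v hs' ht' i
        have hi := hinF i v
        have ho := houtF i v
        rw [← hi, ← ho] at this
        exact_mod_cast this
  -- invariant (D)
  have hDinv : ∀ i v, outdeg (F i) v = 0 → indeg (F i) v ≤ 1 := by
    intro i v hv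
    by_cases hs' : ∃ j, s j = v
    · obtain ⟨j, rfl⟩ := hs'
      rw [hinsi i j]
      omega
    · by_cases ht' : ∃ j, t j = v
      · obtain ⟨j, rfl⟩ := ht'
        have := indeg_mono (hFsub i) (t j)
        have := hints j
        omega
      · have := h2 v hs' ht' i
        have hi := hinF i v
        have ho := houtF i v
        rw [← hi, ← ho] at this
        have : indeg (F i) v = outdeg (F i) v := by exact_mod_cast this
        omega
  -- apply the key lemma
  have hPex : ∀ i, ∃ (p : List V) (d : V), p.head? = some (s i) ∧ p.getLast? = some d ∧
      p.Nodup ∧ p.Chain' (fun u v => (u, v) ∈ F i) ∧ outdeg (F i) d = 0 ∧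
      1 ≤ indeg (F i) d ∧ (∀ e, e ∈ pathEdges p ↔ e ∈ F i) := by
    intro i
    apply scp_key (F i).card (F i) (s i) le_rfl (acyclic_mono (hFsub i) hacyc)
    · rw [houtsi i, hinsi i i]
    · exact hCinv i
    · exact hDinv i
  choose P d hh hl hnd hch hod hid hpe using hPex
  have hmemE : ∀ i e, e ∈ pathEdges (P i) ↔ e ∈ E ∧ x i e = 1 := by
    intro i e
    rw [hpe i e, hF]
    simp [Finset.mem_filter]
  refine ⟨P, ?_, hmemE, ?_, ?_, ?_⟩
  · -- each path goes from s i to some destination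
    intro i
    have hdn : ¬ ∃ j, s j = d i := by
      rintro ⟨j, hj⟩
      have := hid i
      rw [← hj] at this
      rw [hinsi i j] at this
      omega
    have hdt : ∃ j, t j = d i := by
      by_contra ht'
      have := h2 (d i) hdn ht' i
      have hi := hinF i (d i)
      have ho := houtF i (d i)
      rw [← hi, ← ho] at this
      have heq : indeg (F i) (d i) = outdeg (F i) (d i) := by exact_mod_cast this
      have := hid i
      have := hod i
      omega
    obtain ⟨j, hj⟩ := hdt
    refine ⟨j, ⟨⟨?_, hnd i, ?_⟩, hh i, by rw [hj]; exact hl i⟩⟩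
    · intro hnil
      have := hh i
      rw [hnil] at this
      simp at this
    · exact (hch i).imp (fun {a b} hab => hFsub i hab)
  · -- edge-disjoint
    intro i j hij e hei hej
    rw [hmemE i e] at hei
    rw [hmemE j e] at hej
    exact hij (uniq e hei.1 i j hei.2 hej.2)
  · -- coverage
    intro e he
    have hne : ∑ i, x i e ≠ 0 := by rw [h1 e he]; norm_num
    obtain ⟨i, _, hi⟩ := Finset.exists_ne_zero_of_sum_ne_zero hne
    refine ⟨i, (hmemE i e).2 ⟨he, ?_⟩⟩
    rcases hint i e he with h | h
    · exact absurd h hi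
    · exact h
  · -- cost
    have hlw : ∀ i, listWeight (w i) (P i) = ∑ e ∈ F i, w i e := by
      intro i
      have hnodup : (pathEdges (P i)).Nodup := pathEdges_nodup (hnd i)
      have htf : (pathEdges (P i)).toFinset = F i := by
        ext e
        rw [List.mem_toFinset, hpe i e]
      rw [listWeight, ← htf, List.sum_toFinset _ hnodup]
    have hobj : LPObjective E w x = ∑ i, ∑ e ∈ F i, (w i e : ℚ) := by
      rw [LPObjective, Finset.sum_comm]
      apply Finset.sum_congr rfl
      intro i _
      rw [hF]
      simp only
      rw [Finset.sum_filter]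
      apply Finset.sum_congr rfl
      intro e he
      rcases hint i e he with h | h <;> simp [h]
    rw [hobj]
    push_cast
    apply Finset.sum_congr rfl
    intro i _
    rw [hlw i]
    push_cast
    rfl
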